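/- arXiv:1411.7966 — 11 statements merged into one kernel-verified Lean document; each statement's English description precedes it below -/
import Mathlib

section
/- Let α, β ∈ (0, π/2), F > 0, L > 0, ρ_b, σ_b, ρ_s, σ_s > 0 and set ρ = (ρ_b/σ_b)/(ρ_s/σ_s). Let the member lengths be s₁ = L/2, s₂ = (L/2) tan α, s₃ = L/(2 cos β), b₁ = L/(2 cos α), b₂ = (L/2) tan β, and let the forces f₁, f₂, t₂ be given in terms of free parameters t₁, t₃ by f₁ = (F √(1+tan²α)/(4 tan α))·(1 − (t₃/F)·4 tan β/√(1+tan²β)), f₂ = 2 t₃ tan β/√(1+tan²β), t₂ = F/2 − 2 t₃ tan β/√(1+tan²β). Then the normalized total mass μ = [(ρ_b/σ_b)(2 f₁ b₁ + f₂ b₂) + (ρ_s/σ_s)(2 t₁ s₁ + t₂ s₂ + 2 t₃ s₃)]/((ρ_s/σ_s) F L) satisfies μ = t₁/F + (t₃/F)·c₃ + b_α/4, where b_α = (ρ + (1+ρ) tan²α)/tan α and c₃ = ((1+ρ) tan²β − b_α tan β + 1)/√(1+tan²β). -/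
set_option maxHeartbeats 2000000
open Real

theorem nominal_bridge_normalized_mass
    (α β F L ρb σb ρs σs ρ t₁ t₃ f₁ f₂ t₂ s₁ s₂ s₃ b₁ b₂ μ bα c₃ : ℝ)
    (hα : α ∈ Set.Ioo 0 (π / 2)) (hβ : β ∈ Set.Ioo 0 (π / 2))
    (hF : 0 < F) (hL : 0 < L)
    (hρb : 0 < ρb) (hσb : 0 < σb) (hρs : 0 < ρs) (hσs : 0 < σs)
    (hρ : ρ = (ρb / σb) / (ρs / σs))
    (hs₁ : s₁ = L / 2)
    (hs₂ : s₂ = L / 2 * Real.tan α)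
    (hs₃ : s₃ = L / (2 * Real.cos β))
    (hb₁ : b₁ = L / (2 * Real.cos α))
    (hb₂ : b₂ = L / 2 * Real.tan β)
    (hf₁ : f₁ = F * Real.sqrt (1 + Real.tan α ^ 2) / (4 * Real.tan α) *
        (1 - t₃ / F * (4 * Real.tan β / Real.sqrt (1 + Real.tan β ^ 2))))
    (hf₂ : f₂ = 2 * t₃ * Real.tan β / Real.sqrt (1 + Real.tan β ^ 2))
    (ht₂ : t₂ = F / 2 - 2 * t₃ * Real.tan β / Real.sqrt (1 + Real.tan β ^ 2))
    (hμ : μ = (ρb / σb * (2 * f₁ * b₁ + f₂ * b₂) +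
        ρs / σs * (2 * t₁ * s₁ + t₂ * s₂ + 2 * t₃ * s₃)) / (ρs / σs * F * L))
    (hbα : bα = (ρ + (1 + ρ) * Real.tan α ^ 2) / Real.tan α)
    (hc₃ : c₃ = ((1 + ρ) * Real.tan β ^ 2 - bα * Real.tan β + 1) /
        Real.sqrt (1 + Real.tan β ^ 2)) :
    μ = t₁ / F + t₃ / F * c₃ + bα / 4 := by
  obtain ⟨hα0, hα1⟩ := hα
  obtain ⟨hβ0, hβ1⟩ := hβ
  have hcα : 0 < Real.cos α := Real.cos_pos_of_mem_Ioo ⟨by linarith [Real.pi_pos], hα1⟩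
  have hcβ : 0 < Real.cos β := Real.cos_pos_of_mem_Ioo ⟨by linarith [Real.pi_pos], hβ1⟩
  have htα : 0 < Real.tan α := Real.tan_pos_of_pos_of_lt_pi_div_two hα0 hα1
  have htβ : 0 < Real.tan β := Real.tan_pos_of_pos_of_lt_pi_div_two hβ0 hβ1
  have hsqα : Real.sqrt (1 + Real.tan α ^ 2) = 1 / Real.cos α := by
    rw [show (1 : ℝ) + Real.tan α ^ 2 = (1 / Real.cos α) ^ 2 by
      rw [Real.tan_eq_sin_div_cos]
      field_simp
      linarith [Real.sin_sq_add_cos_sq α]]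
    exact Real.sqrt_sq (by positivity)
  have hsqβ : Real.sqrt (1 + Real.tan β ^ 2) = 1 / Real.cos β := by
    rw [show (1 : ℝ) + Real.tan β ^ 2 = (1 / Real.cos β) ^ 2 by
      rw [Real.tan_eq_sin_div_cos]
      field_simp
      linarith [Real.sin_sq_add_cos_sq β]]
    exact Real.sqrt_sq (by positivity)
  have hsα : 0 < Real.sin α := Real.sin_pos_of_pos_of_lt_pi hα0 (by linarith [Real.pi_pos])
  have hsβ : 0 < Real.sin β := Real.sin_pos_of_pos_of_lt_pi hβ0 (by linarith [Real.pi_pos])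
  have hpα := Real.sin_sq_add_cos_sq α
  have hpβ := Real.sin_sq_add_cos_sq β
  subst hρ hs₁ hs₂ hs₃ hb₁ hb₂ hf₁ hf₂ ht₂ hμ hbα hc₃
  rw [hsqα, hsqβ, Real.tan_eq_sin_div_cos, Real.tan_eq_sin_div_cos]
  set_option maxHeartbeats 1000000 in
  field_simp
  ring_nf
  linear_combination (16 * ρb * Real.cos β * σs * t₃ * Real.sin β
      - 4 * ρb * Real.cos β * F * σs)
      * hpα
    - 16 * t₃ * Real.cos α * Real.sin α * σb * ρs * hpβ
end

section
/- Let ρ > 0. The function μ_Y(α) = (tan α)/4 + ρ (1 + tan²α)/(4 tan α), defined for α ∈ (0, π/2), attains its unique global minimum at α*_Y = arctan(√(ρ/(1+ρ))), and the minimum value is μ*_Y = (1/2) √(ρ(1+ρ)). -/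
open Real

theorem superstructure_yield_optimal_angle (ρ : ℝ) (hρ : 0 < ρ)
    (μY : ℝ → ℝ)
    (hμY : ∀ α, μY α = Real.tan α / 4 + ρ * (1 + Real.tan α ^ 2) / (4 * Real.tan α))
    (αY : ℝ) (hαY : αY = Real.arctan (Real.sqrt (ρ / (1 + ρ)))) :
    αY ∈ Set.Ioo 0 (π / 2) ∧
    (∀ α ∈ Set.Ioo 0 (π / 2), α ≠ αY → μY αY < μY α) ∧
    μY αY = 1 / 2 * Real.sqrt (ρ * (1 + ρ)) := by
  have h1ρ : (0:ℝ) < 1 + ρ := by linarith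
  set s := Real.sqrt (ρ / (1 + ρ)) with hs
  have hspos : 0 < s := Real.sqrt_pos.mpr (by positivity)
  have hs2 : s ^ 2 = ρ / (1 + ρ) := Real.sq_sqrt (by positivity)
  have hs2' : s ^ 2 * (1 + ρ) = ρ := by rw [hs2]; field_simp
  have htanY : Real.tan αY = s := by rw [hαY]; exact Real.tan_arctan s
  have hmem : αY ∈ Set.Ioo 0 (π/2) := by
    constructor
    · rw [hαY]; calc (0:ℝ) = Real.arctan 0 := Real.arctan_zero.symm
        _ < _ := Real.arctan_strictMono hspos
    · rw [hαY]; exact Real.arctan_lt_pi_div_two s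
  have hval' : μY αY = s * (1 + ρ) / 2 := by
    rw [hμY, htanY]
    field_simp
    nlinarith [hs2']
  have hkey : Real.sqrt (ρ * (1 + ρ)) = s * (1 + ρ) := by
    have h1 : (s * (1 + ρ)) ^ 2 = ρ * (1 + ρ) := by
      rw [mul_pow]; nlinarith [hs2']
    rw [← h1, Real.sqrt_sq (by positivity)]
  refine ⟨hmem, ?_, by rw [hval', hkey]; ring⟩
  intro α hα hne
  set t := Real.tan α with ht
  have htpos : 0 < t := Real.tan_pos_of_pos_of_lt_pi_div_two hα.1 hα.2
  have hts : t ≠ s := by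
    intro h
    apply hne
    apply Real.injOn_tan
    · exact ⟨by linarith [hα.1, Real.pi_pos], hα.2⟩
    · exact ⟨by linarith [hmem.1, Real.pi_pos], hmem.2⟩
    · rw [← ht, htanY, h]
  have h2 : 0 < (t - s) ^ 2 :=
    lt_of_le_of_ne (sq_nonneg _) (Ne.symm (pow_ne_zero 2 (sub_ne_zero.mpr hts)))
  rw [hval', hμY, ← ht]
  have hcomb : t / 4 + ρ * (1 + t ^ 2) / (4 * t) = (t ^ 2 + ρ * (1 + t ^ 2)) / (4 * t) := by
    field_simp
  rw [hcomb, lt_div_iff₀ (by positivity)]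
  nlinarith [mul_pos h1ρ h2, hs2']
end

section
/- Let ρ > 0. The function μ_Y(β) = (1 + tan²β)/(4 tan β) + (ρ/4) tan β, defined for β ∈ (0, π/2), attains its unique global minimum at β*_Y = arctan(1/√(1+ρ)), and the minimum value is μ*_Y = √(1+ρ)/2. -/
open Real

theorem substructure_yield_optimal_angle (ρ : ℝ) (hρ : 0 < ρ)
    (μY : ℝ → ℝ)
    (hμY : ∀ β, μY β = (1 + Real.tan β ^ 2) / (4 * Real.tan β) + ρ / 4 * Real.tan β)
    (βY : ℝ) (hβY : βY = Real.arctan (1 / Real.sqrt (1 + ρ))) :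
    βY ∈ Set.Ioo 0 (π / 2) ∧
    (∀ β ∈ Set.Ioo 0 (π / 2), β ≠ βY → μY βY < μY β) ∧
    μY βY = Real.sqrt (1 + ρ) / 2 := by
  set s := Real.sqrt (1 + ρ) with hsdef
  have hs : 0 < s := Real.sqrt_pos.mpr (by linarith)
  have hs2 : s ^ 2 = 1 + ρ := Real.sq_sqrt (by linarith)
  have htanY : Real.tan βY = 1 / s := by rw [hβY, Real.tan_arctan]
  have hmem : βY ∈ Set.Ioo 0 (π / 2) := by
    constructor
    · rw [hβY]; exact by rw [← Real.arctan_zero]; exact Real.arctan_strictMono (by positivity)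
    · rw [hβY]; exact Real.arctan_lt_pi_div_two _
  have hval : μY βY = s / 2 := by
    rw [hμY, htanY]
    field_simp
    nlinarith [hs2, hs]
  refine ⟨hmem, ?_, hval⟩
  intro β hβ hne
  have htβ : 0 < Real.tan β := Real.tan_pos_of_pos_of_lt_pi_div_two hβ.1 hβ.2
  have htne : Real.tan β ≠ 1 / s := by
    intro h
    apply hne
    apply Real.injOn_tan ⟨by linarith [hβ.1, Real.pi_div_two_pos], hβ.2⟩
      ⟨by linarith [hmem.1, Real.pi_div_two_pos], hmem.2⟩
    rw [h, htanY]
  rw [hval, hμY]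
  set t := Real.tan β with htdef
  have hst : s * t - 1 ≠ 0 := by
    intro h
    apply htne
    field_simp
    linarith
  have key : (s * t - 1) ^ 2 > 0 := by positivity
  rw [div_add' _ _ _ (by positivity), div_lt_div_iff₀ (by norm_num) (by positivity)]
  nlinarith [hs2, hs, htβ, key]
end

section
/- The function g(t) = (1 + t²)^{5/4}/√t, defined for t > 0, attains its unique global minimum at t = 1/2. Consequently, for every η > 0 the bar-mass function μ̄_B(α) = η (1 + tan²α)^{5/4}/(2 √(tan α)) on (0, π/2) attains its unique global minimum at α*_B = arctan(1/2), and the full normalized mass μ_B(α) = (tan α)/4 + η (1 + tan²α)^{5/4}/(2 √(tan α)) evaluated at α = arctan(1/2) equals (1 + 5^{5/4} η)/8. -/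
open Real

lemma pow4_eq (x : ℝ) (hx : 0 < x) :
    ((1 + x ^ 2) ^ ((5 : ℝ) / 4) / Real.sqrt x) ^ (4 : ℕ) = (1 + x ^ 2) ^ (5 : ℕ) / x ^ 2 := by
  have h1 : (0:ℝ) ≤ 1 + x ^ 2 := by positivity
  rw [div_pow]
  congr 1
  · rw [← Real.rpow_natCast ((1 + x ^ 2) ^ ((5:ℝ)/4)) 4, ← Real.rpow_mul h1]
    norm_num
  · rw [show (4:ℕ) = 2*2 by norm_num, pow_mul, Real.sq_sqrt hx.le]

lemma key (t : ℝ) (ht : 0 < t) (hne : t ≠ 1 / 2) :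
    ((1 + ((1:ℝ)/2) ^ 2) ^ ((5 : ℝ) / 4) / Real.sqrt (1/2)) <
    (1 + t ^ 2) ^ ((5 : ℝ) / 4) / Real.sqrt t := by
  have hb : (0:ℝ) < (1 + t ^ 2) ^ ((5 : ℝ) / 4) / Real.sqrt t := by
    apply div_pos (Real.rpow_pos_of_pos (by positivity) _) (Real.sqrt_pos.2 ht)
  refine lt_of_pow_lt_pow_left₀ 4 hb.le ?_
  rw [pow4_eq _ ht, pow4_eq _ (by norm_num : (0:ℝ) < 1/2)]
  rw [div_lt_div_iff₀ (by positivity) (by positivity)]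
  have h1 : (2*t - 1) ≠ 0 := fun h => hne (by linarith)
  have h2 : 0 < (2*t - 1)^2 := by positivity
  have h3 : (0:ℝ) < (2*t+1)^2 * (16*t^6+88*t^4+203*t^2+256) := by positivity
  nlinarith [mul_pos h2 h3]

theorem superstructure_buckling_optimal_angle
    (g : ℝ → ℝ)
    (hg : ∀ t, g t = (1 + t ^ 2) ^ ((5 : ℝ) / 4) / Real.sqrt t) :
    ((1 : ℝ) / 2 > 0 ∧ ∀ t > (0 : ℝ), t ≠ 1 / 2 → g (1 / 2) < g t) ∧
    (∀ η > (0 : ℝ), ∀ μbarB : ℝ → ℝ,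
      (∀ α, μbarB α = η * (1 + Real.tan α ^ 2) ^ ((5 : ℝ) / 4) /
          (2 * Real.sqrt (Real.tan α))) →
      (Real.arctan (1 / 2) ∈ Set.Ioo 0 (π / 2) ∧
        ∀ α ∈ Set.Ioo 0 (π / 2), α ≠ Real.arctan (1 / 2) →
          μbarB (Real.arctan (1 / 2)) < μbarB α)) ∧
    (∀ η > (0 : ℝ), ∀ μB : ℝ → ℝ,
      (∀ α, μB α = Real.tan α / 4 +
          η * (1 + Real.tan α ^ 2) ^ ((5 : ℝ) / 4) / (2 * Real.sqrt (Real.tan α))) →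
      μB (Real.arctan (1 / 2)) = (1 + 5 ^ ((5 : ℝ) / 4) * η) / 8) := by
  have harc : Real.arctan (1/2) ∈ Set.Ioo 0 (π/2) :=
    ⟨by rw [← Real.arctan_zero]; exact Real.arctan_strictMono (by norm_num), Real.arctan_lt_pi_div_two _⟩
  have htan : Real.tan (Real.arctan (1/2)) = 1/2 := Real.tan_arctan _
  refine ⟨⟨by norm_num, fun t ht hne => ?_⟩, fun η hη μbarB hμ => ⟨harc, fun α hα hne => ?_⟩,
    fun η hη μB hμ => ?_⟩
  · rw [hg, hg]; exact key t ht hne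
  · have htα : 0 < Real.tan α := Real.tan_pos_of_pos_of_lt_pi_div_two hα.1 hα.2
    have htne : Real.tan α ≠ 1/2 := fun h => hne (by
      rw [← Real.arctan_tan (by linarith [hα.1, Real.pi_pos] : -(π/2) < α) hα.2, h])
    have hk := key _ htα htne
    rw [hμ, hμ, htan]
    have h2 : (0:ℝ) < η / 2 := by positivity
    calc η * (1 + ((1:ℝ)/2) ^ 2) ^ ((5:ℝ)/4) / (2 * Real.sqrt (1/2))
        = (η/2) * ((1 + ((1:ℝ)/2) ^ 2) ^ ((5:ℝ)/4) / Real.sqrt (1/2)) := by ring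
      _ < (η/2) * ((1 + Real.tan α ^ 2) ^ ((5:ℝ)/4) / Real.sqrt (Real.tan α)) := by
          exact mul_lt_mul_of_pos_left hk h2
      _ = η * (1 + Real.tan α ^ 2) ^ ((5:ℝ)/4) / (2 * Real.sqrt (Real.tan α)) := by ring
  · rw [hμ, htan]
    have h54 : (1 + ((1:ℝ)/2) ^ 2) ^ ((5:ℝ)/4) = 5 ^ ((5:ℝ)/4) / (4 * Real.sqrt 2) := by
      have : (1 + ((1:ℝ)/2) ^ 2) = 5/4 := by norm_num
      rw [this, Real.div_rpow (by norm_num) (by norm_num)]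
      congr 1
      rw [show (5:ℝ)/4 = 1 + 1/4 by norm_num, Real.rpow_add (by norm_num), Real.rpow_one]
      congr 1
      rw [show (1:ℝ)/4 = (1/2)*(1/2) by norm_num, Real.rpow_mul (by norm_num),
        ← Real.sqrt_eq_rpow, ← Real.sqrt_eq_rpow,
        show (4:ℝ) = 2^2 by norm_num, Real.sqrt_sq (by norm_num)]
    have hs : Real.sqrt (1/2) = 1 / Real.sqrt 2 := by
      rw [show (1:ℝ)/2 = (2:ℝ)⁻¹ by norm_num, Real.sqrt_inv, inv_eq_one_div]
    rw [h54, hs]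
    have hs2 : Real.sqrt 2 * Real.sqrt 2 = 2 := Real.mul_self_sqrt (by norm_num)
    have hsne : Real.sqrt 2 ≠ 0 := by positivity
    field_simp
    ring_nf
end

section
/- Let ρ > 0. The function h(α) = (α/4)(1 + ρ) + ρ/(4 tan α), defined for α ∈ (0, π/2), attains its unique global minimum at α*_Y = arctan(√ρ), and the minimum value is (1/4)·[(1 + ρ) arctan(√ρ) + √ρ]. -/
open Real

theorem superstructure_infinite_complexity_yield_optimum (ρ : ℝ) (hρ : 0 < ρ)
    (h : ℝ → ℝ)
    (hh : ∀ α, h α = α / 4 * (1 + ρ) + ρ / (4 * Real.tan α))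
    (αY : ℝ) (hαY : αY = Real.arctan (Real.sqrt ρ)) :
    αY ∈ Set.Ioo 0 (π / 2) ∧
    (∀ α ∈ Set.Ioo 0 (π / 2), α ≠ αY → h αY < h α) ∧
    h αY = 1 / 4 * ((1 + ρ) * Real.arctan (Real.sqrt ρ) + Real.sqrt ρ) := by
  have hs : 0 < Real.sqrt ρ := Real.sqrt_pos.mpr hρ
  set s := Real.sqrt ρ with hsdef
  have hs2 : s ^ 2 = ρ := Real.sq_sqrt hρ.le
  set g : ℝ → ℝ := fun t => (1 + ρ) / 4 * Real.arctan t + ρ / 4 * t⁻¹ with hg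
  -- derivative of g
  have hderiv : ∀ t : ℝ, t ≠ 0 →
      HasDerivAt g ((t ^ 2 - ρ) / (4 * t ^ 2 * (1 + t ^ 2))) t := by
    intro t ht
    have h1 : HasDerivAt Real.arctan (1 / (1 + t ^ 2)) t := Real.hasDerivAt_arctan t
    have h2 : HasDerivAt (fun y : ℝ => y⁻¹) (-(t ^ 2)⁻¹) t := hasDerivAt_inv ht
    have h3 := (h1.const_mul ((1 + ρ) / 4)).add (h2.const_mul (ρ / 4))
    refine h3.congr_deriv ?_
    have ht2 : (t : ℝ) ^ 2 ≠ 0 := pow_ne_zero 2 ht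
    have ht3 : (1 : ℝ) + t ^ 2 ≠ 0 := by positivity
    field_simp
    ring
  have hcont : ∀ t : ℝ, t ≠ 0 → ContinuousAt g t := fun t ht =>
    (hderiv t ht).continuousAt
  -- strict antitone on Ioc 0 s
  have hanti : StrictAntiOn g (Set.Ioc 0 s) := by
    apply strictAntiOn_of_deriv_neg (convex_Ioc 0 s)
    · exact fun t ht => (hcont t (ne_of_gt ht.1)).continuousWithinAt
    · intro t ht
      rw [interior_Ioc] at ht
      have ht0 : 0 < t := ht.1
      rw [(hderiv t ht0.ne').deriv]
      have hnum : t ^ 2 - ρ < 0 := by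
        have : t ^ 2 < s ^ 2 := by
          apply pow_lt_pow_left₀ ht.2 ht0.le
          norm_num
        nlinarith
      have hden : 0 < 4 * t ^ 2 * (1 + t ^ 2) := by positivity
      exact div_neg_of_neg_of_pos hnum hden
  -- strict monotone on Ici s
  have hmono : StrictMonoOn g (Set.Ici s) := by
    apply strictMonoOn_of_deriv_pos (convex_Ici s)
    · exact fun t ht => (hcont t (lt_of_lt_of_le hs ht).ne').continuousWithinAt
    · intro t ht
      rw [interior_Ici] at ht
      have ht0 : 0 < t := hs.trans ht
      rw [(hderiv t ht0.ne').deriv]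
      have hnum : 0 < t ^ 2 - ρ := by
        have : s ^ 2 < t ^ 2 := by
          apply pow_lt_pow_left₀ ht hs.le
          norm_num
        nlinarith
      have hden : 0 < 4 * t ^ 2 * (1 + t ^ 2) := by positivity
      exact div_pos hnum hden
  -- g s is the strict minimum on (0,∞)
  have hgmin : ∀ t : ℝ, 0 < t → t ≠ s → g s < g t := by
    intro t ht hts
    rcases lt_or_gt_of_ne hts with hlt | hgt
    · exact hanti ⟨ht, hlt.le⟩ ⟨hs, le_refl s⟩ hlt
    · exact hmono (le_refl s) hgt.le hgt
  have hαYmem : αY ∈ Set.Ioo 0 (π / 2) := by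
    rw [hαY]
    exact ⟨by rw [← Real.arctan_zero]; exact Real.arctan_strictMono hs, Real.arctan_lt_pi_div_two s⟩
  have htanY : Real.tan αY = s := by rw [hαY, Real.tan_arctan]
  -- h equals g ∘ tan on (0, π/2)
  have hhg : ∀ α ∈ Set.Ioo 0 (π / 2), h α = g (Real.tan α) := by
    intro α hα
    rw [hh, hg]
    simp only
    rw [Real.arctan_tan (by linarith [hα.1, Real.pi_pos]) hα.2]
    ring
  have hval : h αY = 1 / 4 * ((1 + ρ) * Real.arctan s + s) := by
    rw [hh, htanY, hαY]
    have : ρ / (4 * s) = s / 4 := by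
      rw [← hs2]; field_simp
    rw [this]; ring
  refine ⟨hαYmem, ?_, hval⟩
  intro α hα hne
  rw [hhg α hα, hhg αY hαYmem, htanY]
  apply hgmin
  · exact Real.tan_pos_of_pos_of_lt_pi_div_two hα.1 hα.2
  · intro hcontr
    apply hne
    have := Real.injOn_tan (Set.mem_Ioo.mpr ⟨by linarith [hα.1, Real.pi_pos], hα.2⟩)
      (Set.mem_Ioo.mpr ⟨by linarith [hαYmem.1, Real.pi_pos], hαYmem.2⟩)
      (by rw [hcontr, htanY])
    exact this
end

section
/- Let ρ > 0. The function h(β) = (β/4)(1 + ρ) + 1/(4 tan β), defined for β ∈ (0, π/2), attains its unique global minimum at β*_Y = arctan(1/√ρ), and the minimum value is (1/4)·[√ρ + (1 + ρ) arctan(1/√ρ)]. -/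
open Real

private lemma aux_hasDerivAt (c : ℝ) {β : ℝ} (hs : Real.sin β ≠ 0) :
    HasDerivAt (fun x => x / 4 * (1 + c) + Real.cos x / (4 * Real.sin x))
      ((1 + c) / 4 - 1 / (4 * Real.sin β ^ 2)) β := by
  have h1 : HasDerivAt (fun x : ℝ => x / 4 * (1 + c)) ((1 + c) / 4) β := by
    have := ((hasDerivAt_id β).div_const 4).mul_const (1 + c)
    refine this.congr_deriv ?_
    ring
  have h2 : HasDerivAt (fun x : ℝ => Real.cos x / (4 * Real.sin x))
      ((-Real.sin β * (4 * Real.sin β) - Real.cos β * (4 * Real.cos β)) /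
        (4 * Real.sin β) ^ 2) β := by
    exact (Real.hasDerivAt_cos β).div
      ((Real.hasDerivAt_sin β).const_mul 4) (by simpa using hs)
  have := h1.add h2
  refine this.congr_deriv ?_
  have hpy : Real.sin β ^ 2 + Real.cos β ^ 2 = 1 := Real.sin_sq_add_cos_sq β
  field_simp
  ring_nf
  nlinarith [hpy]

theorem substructure_infinite_complexity_yield_optimum (ρ : ℝ) (hρ : 0 < ρ)
    (h : ℝ → ℝ)
    (hh : ∀ β, h β = β / 4 * (1 + ρ) + 1 / (4 * Real.tan β))
    (βY : ℝ) (hβY : βY = Real.arctan (1 / Real.sqrt ρ)) :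
    βY ∈ Set.Ioo 0 (π / 2) ∧
    (∀ β ∈ Set.Ioo 0 (π / 2), β ≠ βY → h βY < h β) ∧
    h βY = 1 / 4 * (Real.sqrt ρ + (1 + ρ) * Real.arctan (1 / Real.sqrt ρ)) := by
  have hsρ : 0 < Real.sqrt ρ := Real.sqrt_pos.mpr hρ
  have hx : (0:ℝ) < 1 / Real.sqrt ρ := by positivity
  have hmem : βY ∈ Set.Ioo 0 (π / 2) := by
    rw [hβY]
    refine ⟨?_, Real.arctan_lt_pi_div_two _⟩
    have := Real.arctan_strictMono hx
    rwa [Real.arctan_zero] at this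
  obtain ⟨hβY0, hβY2⟩ := hmem
  -- key: sin βY ^ 2 * (1 + ρ) = 1
  have hsinβY : Real.sin βY = (1 / Real.sqrt ρ) / Real.sqrt (1 + (1 / Real.sqrt ρ) ^ 2) := by
    rw [hβY, Real.sin_arctan]
  have hxsq : (1 / Real.sqrt ρ) ^ 2 = 1 / ρ := by
    rw [div_pow, one_pow, Real.sq_sqrt hρ.le]
  have hkey : Real.sin βY ^ 2 * (1 + ρ) = 1 := by
    rw [hsinβY, div_pow, Real.sq_sqrt (by positivity), hxsq]
    field_simp
    ring
  have hsinβYpos : 0 < Real.sin βY := Real.sin_pos_of_pos_of_lt_pi hβY0 (by linarith [Real.pi_pos])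
  set f : ℝ → ℝ := fun x => x / 4 * (1 + ρ) + Real.cos x / (4 * Real.sin x) with hf
  have hhf : ∀ β ∈ Set.Ioo (0:ℝ) (π / 2), h β = f β := by
    intro β hβ
    have hs : 0 < Real.sin β := Real.sin_pos_of_pos_of_lt_pi hβ.1 (by linarith [Real.pi_pos, hβ.2])
    have hc : 0 < Real.cos β := Real.cos_pos_of_mem_Ioo ⟨by linarith [hβ.1], hβ.2⟩
    rw [hh, hf, Real.tan_eq_sin_div_cos]
    field_simp
  -- derivative sign facts
  have hderiv : ∀ β ∈ Set.Ioo (0:ℝ) (π / 2),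
      deriv f β = (1 + ρ) / 4 - 1 / (4 * Real.sin β ^ 2) := by
    intro β hβ
    have hs : 0 < Real.sin β := Real.sin_pos_of_pos_of_lt_pi hβ.1 (by linarith [Real.pi_pos, hβ.2])
    exact (aux_hasDerivAt ρ hs.ne').deriv
  have hcont : ∀ β ∈ Set.Ioo (0:ℝ) (π / 2), ContinuousAt f β := by
    intro β hβ
    have hs : 0 < Real.sin β := Real.sin_pos_of_pos_of_lt_pi hβ.1 (by linarith [Real.pi_pos, hβ.2])
    exact (aux_hasDerivAt ρ hs.ne').continuousAt
  have hsinmono : ∀ a b, a ∈ Set.Ioo (0:ℝ) (π/2) → b ∈ Set.Ioo (0:ℝ) (π/2) → a < b →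
      Real.sin a < Real.sin b := by
    intro a b ha hb hab
    exact Real.strictMonoOn_sin ⟨by linarith [ha.1, Real.pi_pos], ha.2.le⟩
      ⟨by linarith [hb.1, Real.pi_pos], hb.2.le⟩ hab
  constructor
  · exact ⟨hβY0, hβY2⟩
  constructor
  · intro β hβ hne
    rcases lt_or_gt_of_ne hne with hlt | hgt
    · -- β < βY : f strict anti on Ioc 0 βY
      have hanti : StrictAntiOn f (Set.Ioc 0 βY) := by
        apply strictAntiOn_of_deriv_neg (convex_Ioc 0 βY)
        · intro x hx
          exact (hcont x ⟨hx.1, lt_of_le_of_lt hx.2 hβY2⟩).continuousWithinAt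
        · intro x hx
          rw [interior_Ioc] at hx
          have hxm : x ∈ Set.Ioo (0:ℝ) (π/2) := ⟨hx.1, hx.2.trans hβY2⟩
          rw [hderiv x hxm]
          have hs : 0 < Real.sin x :=
            Real.sin_pos_of_pos_of_lt_pi hxm.1 (by linarith [Real.pi_pos, hxm.2])
          have hlt' : Real.sin x < Real.sin βY := hsinmono x βY hxm ⟨hβY0, hβY2⟩ hx.2
          have h1 : Real.sin x ^ 2 * (1 + ρ) < 1 := by nlinarith
          have : (1 + ρ) / 4 < 1 / (4 * Real.sin x ^ 2) := by
            rw [div_lt_div_iff₀ (by norm_num) (by positivity)]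
            nlinarith
          linarith
      have := hanti ⟨hβ.1, hlt.le⟩ ⟨hβY0, le_refl _⟩ hlt
      rw [hhf β hβ, hhf βY ⟨hβY0, hβY2⟩]
      exact this
    · -- βY < β : f strict mono on Ico βY (π/2)
      have hmono : StrictMonoOn f (Set.Ico βY (π/2)) := by
        apply strictMonoOn_of_deriv_pos (convex_Ico βY (π/2))
        · intro x hx
          exact (hcont x ⟨lt_of_lt_of_le hβY0 hx.1, hx.2⟩).continuousWithinAt
        · intro x hx
          rw [interior_Ico] at hx
          have hxm : x ∈ Set.Ioo (0:ℝ) (π/2) := ⟨hβY0.trans hx.1, hx.2⟩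
          rw [hderiv x hxm]
          have hs : 0 < Real.sin x :=
            Real.sin_pos_of_pos_of_lt_pi hxm.1 (by linarith [Real.pi_pos, hxm.2])
          have hlt' : Real.sin βY < Real.sin x := hsinmono βY x ⟨hβY0, hβY2⟩ hxm hx.1
          have h1 : 1 < Real.sin x ^ 2 * (1 + ρ) := by nlinarith
          have : 1 / (4 * Real.sin x ^ 2) < (1 + ρ) / 4 := by
            rw [div_lt_div_iff₀ (by positivity) (by norm_num)]
            nlinarith
          linarith
      have := hmono ⟨le_refl _, hβY2⟩ ⟨hgt.le, hβ.2⟩ hgt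
      rw [hhf β hβ, hhf βY ⟨hβY0, hβY2⟩]
      exact this
  · rw [hh, hβY, Real.tan_arctan]
    have : (4:ℝ) * (1 / Real.sqrt ρ) = 4 / Real.sqrt ρ := by ring
    rw [this, one_div_div]
    ring
end

section
/- Let ρ > 0 and let n ≥ 1 be a natural number. The function μ_Y(β) = (1/2)(1 − 2^{-n})·[(1 + tan²β)/tan β + ρ tan β], defined for β ∈ (0, π/2), attains its unique global minimum at β*_Y = arctan(1/√(1+ρ)), and the minimum value is (1 − 2^{-n})·√(1+ρ). In particular the minimizing angle does not depend on n. -/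
open Real

theorem substructure_complexity_n_yield_optimum (ρ : ℝ) (hρ : 0 < ρ)
    (n : ℕ) (hn : 1 ≤ n)
    (μY : ℝ → ℝ)
    (hμY : ∀ β, μY β = 1 / 2 * (1 - (2 : ℝ) ^ (-(n : ℝ))) *
        ((1 + Real.tan β ^ 2) / Real.tan β + ρ * Real.tan β))
    (βY : ℝ) (hβY : βY = Real.arctan (1 / Real.sqrt (1 + ρ))) :
    βY ∈ Set.Ioo 0 (π / 2) ∧
    (∀ β ∈ Set.Ioo 0 (π / 2), β ≠ βY → μY βY < μY β) ∧
    μY βY = (1 - (2 : ℝ) ^ (-(n : ℝ))) * Real.sqrt (1 + ρ) := by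
  have hs : (0:ℝ) < Real.sqrt (1 + ρ) := Real.sqrt_pos.mpr (by linarith)
  set s := Real.sqrt (1 + ρ) with hsdef
  have hs2 : s ^ 2 = 1 + ρ := Real.sq_sqrt (by linarith)
  have hβ1 : 0 < βY := by
    rw [hβY]
    have := Real.arctan_strictMono (show (0:ℝ) < 1 / s by positivity)
    simpa using this
  have hβ2 : βY < π / 2 := by rw [hβY]; exact Real.arctan_lt_pi_div_two _
  have htan : Real.tan βY = 1 / s := by rw [hβY, Real.tan_arctan]
  have hc : (0:ℝ) < 1 - (2:ℝ) ^ (-(n:ℝ)) := by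
    have hn' : (0:ℝ) < (n:ℝ) := by exact_mod_cast Nat.pos_of_ne_zero (by omega)
    have : (2:ℝ) ^ (-(n:ℝ)) < 1 :=
      Real.rpow_lt_one_of_one_lt_of_neg one_lt_two (by linarith)
    linarith
  have hval : μY βY = (1 - (2:ℝ) ^ (-(n:ℝ))) * s := by
    rw [hμY, htan]
    field_simp
    linear_combination (-1 : ℝ) * hs2
  refine ⟨⟨hβ1, hβ2⟩, ?_, hval⟩
  intro β hβ hne
  have ht : 0 < Real.tan β := Real.tan_pos_of_pos_of_lt_pi_div_two hβ.1 hβ.2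
  have htne : Real.tan β ≠ 1 / s := by
    intro h
    apply hne
    apply Real.injOn_tan ⟨by linarith [hβ.1, Real.pi_pos], hβ.2⟩
      ⟨by linarith [Real.pi_pos], hβ2⟩
    rw [h, htan]
  set t := Real.tan β with htdef
  have hkey : 2 * s < (1 + t ^ 2) / t + ρ * t := by
    have h1 : 1 - s * t ≠ 0 := by
      intro h
      apply htne
      field_simp
      linarith
    have h2 : 0 < (1 - s * t) ^ 2 := pow_two_pos_of_ne_zero h1
    have heq : (1 + t ^ 2) / t + ρ * t - 2 * s = (1 - s * t) ^ 2 / t := by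
      field_simp
      nlinarith [hs2]
    nlinarith [div_pos h2 ht]
  have := hμY β
  rw [this, hval]
  nlinarith [hc, hkey]
end

section
/- Let ρ > 0 and let n ≥ 1 be a natural number. The function μ_Y(α) = (1/2)(1 − 2^{-n})·[tan α + ρ (1 + tan²α)/tan α], defined for α ∈ (0, π/2), attains its unique global minimum at α*_Y = arctan(√(ρ/(1+ρ))), and the minimum value is (1 − 2^{-n})·√(ρ(1+ρ)). In particular the minimizing angle does not depend on n. -/
open Real

theorem superstructure_complexity_n_yield_optimum (ρ : ℝ) (hρ : 0 < ρ)
    (n : ℕ) (hn : 1 ≤ n)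
    (μY : ℝ → ℝ)
    (hμY : ∀ α, μY α = 1 / 2 * (1 - (2 : ℝ) ^ (-(n : ℝ))) *
        (Real.tan α + ρ * (1 + Real.tan α ^ 2) / Real.tan α))
    (αY : ℝ) (hαY : αY = Real.arctan (Real.sqrt (ρ / (1 + ρ)))) :
    αY ∈ Set.Ioo 0 (π / 2) ∧
    (∀ α ∈ Set.Ioo 0 (π / 2), α ≠ αY → μY αY < μY α) ∧
    μY αY = (1 - (2 : ℝ) ^ (-(n : ℝ))) * Real.sqrt (ρ * (1 + ρ)) := by
  have h1ρ : (0:ℝ) < 1 + ρ := by linarith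
  set s := Real.sqrt (ρ / (1 + ρ)) with hs_def
  set r := Real.sqrt (ρ * (1 + ρ)) with hr_def
  have hs : 0 < s := Real.sqrt_pos.mpr (div_pos hρ h1ρ)
  have hr : 0 < r := Real.sqrt_pos.mpr (mul_pos hρ h1ρ)
  have hs2 : s ^ 2 = ρ / (1 + ρ) := Real.sq_sqrt (div_pos hρ h1ρ).le
  have hr2 : r ^ 2 = ρ * (1 + ρ) := Real.sq_sqrt (mul_pos hρ h1ρ).le
  have hsr : (1 + ρ) * s = r := by
    have h1 : (1 + ρ) * s = Real.sqrt ((1 + ρ) ^ 2 * (ρ / (1 + ρ))) := by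
      rw [Real.sqrt_mul (sq_nonneg _), Real.sqrt_sq h1ρ.le]
    rw [h1, hr_def]
    congr 1
    field_simp
  -- positivity of the coefficient
  have hpow : (2 : ℝ) ^ (-(n : ℝ)) < 1 := by
    apply Real.rpow_lt_one_of_one_lt_of_neg one_lt_two
    have : (1:ℝ) ≤ (n:ℝ) := by exact_mod_cast hn
    linarith
  have hc : 0 < 1 - (2 : ℝ) ^ (-(n : ℝ)) := by linarith
  -- αY in interval
  have hmem : αY ∈ Set.Ioo 0 (π / 2) := by
    rw [hαY]
    constructor
    · have := Real.arctan_strictMono hs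
      rwa [Real.arctan_zero] at this
    · exact Real.arctan_lt_pi_div_two _
  have htanY : Real.tan αY = s := by rw [hαY, Real.tan_arctan]
  -- value at αY
  have hfs : s + ρ * (1 + s ^ 2) / s = 2 * r := by
    have h3 : (1 + ρ) * s ^ 2 = ρ := by rw [hs2]; field_simp
    rw [add_div' _ _ _ hs.ne', div_eq_iff hs.ne']
    linear_combination (-1 : ℝ) * h3 + 2 * s * hsr
  have hval : μY αY = (1 - (2 : ℝ) ^ (-(n : ℝ))) * r := by
    rw [hμY, htanY, hfs]; ring
  refine ⟨hmem, ?_, hval⟩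
  intro α hα hne
  have ht : 0 < Real.tan α := Real.tan_pos_of_pos_of_lt_pi_div_two hα.1 hα.2
  set t := Real.tan α with ht_def
  have htne : t ≠ s := by
    intro h
    apply hne
    have h1 : α ∈ Set.Ioo (-(π/2)) (π/2) := ⟨by linarith [hα.1, Real.pi_pos], hα.2⟩
    have h2 : αY ∈ Set.Ioo (-(π/2)) (π/2) := ⟨by linarith [hmem.1, Real.pi_pos], hmem.2⟩
    exact Real.injOn_tan h1 h2 (by rw [← ht_def, h, htanY])
  have hkey : 2 * r * t < (1 + ρ) * t ^ 2 + ρ := by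
    have hsq : 0 < (t - s) ^ 2 :=
      lt_of_le_of_ne (sq_nonneg _) (Ne.symm (pow_ne_zero 2 (sub_ne_zero.mpr htne)))
    have h3 : (1 + ρ) * s ^ 2 = ρ := by rw [hs2]; field_simp
    have h4 : (1 + ρ) * s * t = r * t := by rw [hsr]
    nlinarith [mul_pos h1ρ hsq, h3, h4]
  have hft : 2 * r < t + ρ * (1 + t ^ 2) / t := by
    rw [add_div' _ _ _ ht.ne', lt_div_iff₀ ht]
    nlinarith [hkey]
  rw [hval, hμY]
  rw [← ht_def]
  nlinarith [hft, hc]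
end

section
/- Let F, L, g, w_d, ρ_d, σ_d be positive real numbers and let n ≥ 1 be a natural number. Define c₁ = 3 w_d g ρ_d² L³/(8 σ_d), c₂ = 16 σ_d F/(3 w_d g² L³ ρ_d²), and ℓ_d = L/2ⁿ. Then m_d = c₁ 2^{-3n} + c₁ 2^{-2n} √(c₂ + 2^{-2n}) is the unique positive real number satisfying the deck stress equation σ_d = (3/4) f_d ℓ_d²/(w_d t_d²), where f_d = F/L + m_d g 2ⁿ/L and t_d = m_d/(ρ_d w_d ℓ_d). -/
open Real

set_option maxHeartbeats 1000000 in
theorem deck_mass_unique_solution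
    (F L g wd ρd σd : ℝ)
    (hF : 0 < F) (hL : 0 < L) (hg : 0 < g) (hwd : 0 < wd)
    (hρd : 0 < ρd) (hσd : 0 < σd)
    (n : ℕ) (hn : 1 ≤ n)
    (c₁ c₂ ℓd md : ℝ)
    (hc₁ : c₁ = 3 * wd * g * ρd ^ 2 * L ^ 3 / (8 * σd))
    (hc₂ : c₂ = 16 * σd * F / (3 * wd * g ^ 2 * L ^ 3 * ρd ^ 2))
    (hℓd : ℓd = L / 2 ^ n)
    (hmd : md = c₁ * (2 : ℝ) ^ (-(3 * (n : ℝ))) +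
        c₁ * (2 : ℝ) ^ (-(2 * (n : ℝ))) *
          Real.sqrt (c₂ + (2 : ℝ) ^ (-(2 * (n : ℝ))))) :
    (0 < md ∧
      σd = 3 / 4 * ((F / L + md * g * 2 ^ n / L) * ℓd ^ 2) /
        (wd * (md / (ρd * wd * ℓd)) ^ 2)) ∧
    ∀ m : ℝ, 0 < m →
      σd = 3 / 4 * ((F / L + m * g * 2 ^ n / L) * ℓd ^ 2) /
        (wd * (m / (ρd * wd * ℓd)) ^ 2) → m = md := by
  obtain ⟨p, hp⟩ : ∃ p : ℝ, (2 : ℝ) ^ n = p := ⟨_, rfl⟩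
  rw [hp] at hℓd ⊢
  have hppos : 0 < p := hp ▸ (by positivity)
  have hq2 : (2 : ℝ) ^ (-(2 * (n : ℝ))) = (p ^ 2)⁻¹ := by
    rw [Real.rpow_neg (by norm_num : (0:ℝ) ≤ 2)]
    congr 1
    rw [show (2 * (n:ℝ)) = ((2 * n : ℕ) : ℝ) by push_cast; ring,
      Real.rpow_natCast, ← hp, ← pow_mul, mul_comm]
  have hq3 : (2 : ℝ) ^ (-(3 * (n : ℝ))) = (p ^ 3)⁻¹ := by
    rw [Real.rpow_neg (by norm_num : (0:ℝ) ≤ 2)]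
    congr 1
    rw [show (3 * (n:ℝ)) = ((3 * n : ℕ) : ℝ) by push_cast; ring,
      Real.rpow_natCast, ← hp, ← pow_mul, mul_comm]
  have hc₁pos : 0 < c₁ := by rw [hc₁]; positivity
  have hc₂pos : 0 < c₂ := by rw [hc₂]; positivity
  obtain ⟨s, hsdef⟩ : ∃ s : ℝ,
      Real.sqrt (c₂ + (2 : ℝ) ^ (-(2 * (n : ℝ)))) = s := ⟨_, rfl⟩
  have hmd' : md = c₁ * (p ^ 3)⁻¹ + c₁ * (p ^ 2)⁻¹ * s := by
    rw [hmd, hsdef, hq2, hq3]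
  have hs2 : s ^ 2 = c₂ + (p ^ 2)⁻¹ := by
    rw [← hsdef, Real.sq_sqrt (by rw [hq2]; positivity), hq2]
  have hspos : 0 < s := by
    rw [← hsdef]
    exact Real.sqrt_pos.mpr (by rw [hq2]; positivity)
  have hmdpos : 0 < md := by rw [hmd']; positivity
  have hquad : σd * md ^ 2 =
      2 * σd * c₁ * (p ^ 3)⁻¹ * md + σd * c₁ ^ 2 * c₂ * ((p ^ 2)⁻¹) ^ 2 := by
    rw [hmd']
    linear_combination (σd * c₁ ^ 2 * ((p ^ 2)⁻¹) ^ 2) * hs2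
  have key : ∀ m : ℝ, 0 < m →
      (σd = 3 / 4 * ((F / L + m * g * p / L) * ℓd ^ 2) /
          (wd * (m / (ρd * wd * ℓd)) ^ 2) ↔
        σd * m ^ 2 =
          2 * σd * c₁ * (p ^ 3)⁻¹ * m + σd * c₁ ^ 2 * c₂ * ((p ^ 2)⁻¹) ^ 2) := by
    intro m hm
    have hℓpos : 0 < ℓd := by rw [hℓd]; positivity
    rw [eq_div_iff (by positivity), hℓd, hc₁, hc₂]
    constructor
    · intro h
      field_simp at h ⊢
      linear_combination 16 * h
    · intro h
      field_simp at h ⊢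
      apply mul_left_cancel₀
        (show (384 * σd ^ 3 * g ^ 2 * L ^ 2 * ρd ^ 2 * p ^ 3 : ℝ) ≠ 0 by positivity)
      linear_combination (384 * σd ^ 3 * g ^ 2 * L ^ 2 * ρd ^ 2 * p ^ 3 / 16) * h
  refine ⟨⟨hmdpos, (key md hmdpos).mpr hquad⟩, ?_⟩
  intro m hm heq
  have hEm := (key m hm).mp heq
  have hfac : (m - md) * (σd * (m + md) - 2 * σd * c₁ * (p ^ 3)⁻¹) = 0 := by
    linear_combination hEm - hquad
  have hsgt : p⁻¹ < s := by
    have h1 : (p⁻¹) ^ 2 < s ^ 2 := by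
      rw [hs2, ← inv_pow]; linarith
    exact lt_of_pow_lt_pow_left₀ 2 hspos.le h1
  have hdiff : md - 2 * c₁ * (p ^ 3)⁻¹ = c₁ * (p ^ 2)⁻¹ * (s - p⁻¹) := by
    rw [hmd']; field_simp; ring
  have hmdgt : 2 * c₁ * (p ^ 3)⁻¹ < md := by
    have hpos : 0 < c₁ * (p ^ 2)⁻¹ * (s - p⁻¹) :=
      mul_pos (mul_pos hc₁pos (by positivity)) (sub_pos.mpr hsgt)
    linarith [hdiff, hpos]
  rcases mul_eq_zero.mp hfac with h | h
  · linarith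
  · exfalso
    have h2 : 0 < m + md - 2 * c₁ * (p ^ 3)⁻¹ := by linarith
    have h1 : 0 < σd * (m + md - 2 * c₁ * (p ^ 3)⁻¹) := mul_pos hσd h2
    have h3 : σd * (m + md) - 2 * σd * c₁ * (p ^ 3)⁻¹
        = σd * (m + md - 2 * c₁ * (p ^ 3)⁻¹) := by ring
    rw [h3] at h
    linarith
end

section
/- Let ρ > 0, let n ≥ 1 be a natural number, and let δ ≥ 0 (the deck-load ratio δ = 2ⁿ g m_d/F). The function μ_Y(β) = (1/2)(1 − 2^{-n})(1 + δ)·[(1 + tan²β)/tan β + ρ tan β], defined for β ∈ (0, π/2), attains its unique global minimum at β*_Y = arctan(1/√(1+ρ)), and the minimum value is (1 − 2^{-n})(1 + δ)·√(1+ρ). The minimizing angle depends neither on n nor on δ. -/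
open Real

theorem substructure_with_deck_yield_optimum (ρ : ℝ) (hρ : 0 < ρ)
    (n : ℕ) (hn : 1 ≤ n) (δ : ℝ) (hδ : 0 ≤ δ)
    (μY : ℝ → ℝ)
    (hμY : ∀ β, μY β = 1 / 2 * (1 - (2 : ℝ) ^ (-(n : ℝ))) * (1 + δ) *
        ((1 + Real.tan β ^ 2) / Real.tan β + ρ * Real.tan β))
    (βY : ℝ) (hβY : βY = Real.arctan (1 / Real.sqrt (1 + ρ))) :
    βY ∈ Set.Ioo 0 (π / 2) ∧
    (∀ β ∈ Set.Ioo 0 (π / 2), β ≠ βY → μY βY < μY β) ∧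
    μY βY = (1 - (2 : ℝ) ^ (-(n : ℝ))) * (1 + δ) * Real.sqrt (1 + ρ) := by
  set s := Real.sqrt (1 + ρ) with hs_def
  have h1ρ : (0:ℝ) < 1 + ρ := by linarith
  have hs : 0 < s := Real.sqrt_pos.mpr h1ρ
  have hs2 : s ^ 2 = 1 + ρ := Real.sq_sqrt h1ρ.le
  have ht0 : (0:ℝ) < 1 / s := by positivity
  -- βY in Ioo
  have hβY_mem : βY ∈ Set.Ioo 0 (π / 2) := by
    rw [hβY]
    refine ⟨?_, Real.arctan_lt_pi_div_two _⟩
    rw [← Real.arctan_zero]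
    exact Real.arctan_strictMono ht0
  have htanβY : Real.tan βY = 1 / s := by rw [hβY, Real.tan_arctan]
  -- positivity of the constant
  have hpow : (2:ℝ) ^ (-(n : ℝ)) < 1 := by
    apply Real.rpow_lt_one_of_one_lt_of_neg one_lt_two
    simp only [neg_neg, Left.neg_neg_iff]
    exact_mod_cast Nat.lt_of_lt_of_le Nat.zero_lt_one hn
  have hc : 0 < 1 / 2 * (1 - (2 : ℝ) ^ (-(n : ℝ))) * (1 + δ) := by
    have : (0:ℝ) < 1 + δ := by linarith
    nlinarith
  -- value at βY
  have hval : (1 + Real.tan βY ^ 2) / Real.tan βY + ρ * Real.tan βY = 2 * s := by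
    rw [htanβY]
    field_simp
    nlinarith [hs2]
  refine ⟨hβY_mem, ?_, ?_⟩
  · intro β hβ hne
    have htβ : 0 < Real.tan β := Real.tan_pos_of_pos_of_lt_pi_div_two hβ.1 hβ.2
    have htne : Real.tan β ≠ 1 / s := by
      intro h
      apply hne
      have h2 : Real.tan β = Real.tan βY := by rw [h, htanβY]
      have : Set.InjOn Real.tan (Set.Ioo (-(π/2)) (π/2)) := Real.injOn_tan
      apply this ⟨by linarith [hβ.1, Real.pi_pos], hβ.2⟩
        ⟨by linarith [hβY_mem.1, Real.pi_pos], hβY_mem.2⟩ h2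
    rw [hμY, hμY, hval]
    apply mul_lt_mul_of_pos_left _ hc
    set t := Real.tan β
    have key : (1 + t ^ 2) / t + ρ * t > 2 * s := by
      rw [gt_iff_lt, div_add' _ _ _ (ne_of_gt htβ), lt_div_iff₀ htβ]
      have hne1 : 1 - s * t ≠ 0 := by
        intro h
        apply htne
        field_simp at h ⊢
        linarith
      have hpos : 0 < (1 - s * t) ^ 2 := by positivity
      nlinarith [hpos, hs2]
    exact key
  · rw [hμY, hval]; ring
end

section
/- Let ρ > 0, let n ≥ 1 be a natural number, and let δ ≥ 0 (the deck-load ratio δ = 2ⁿ g m_d/F). The function μ_Y(α) = (1/2)(1 − 2^{-n})(1 + δ)·[tan α + ρ (1 + tan²α)/tan α], defined for α ∈ (0, π/2), attains its unique global minimum at α*_Y = arctan(√(ρ/(1+ρ))), and the minimum value is (1 − 2^{-n})(1 + δ)·√(ρ(1+ρ)). The minimizing angle depends neither on n nor on δ. -/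
open Real

theorem superstructure_with_deck_yield_optimum (ρ : ℝ) (hρ : 0 < ρ)
    (n : ℕ) (hn : 1 ≤ n) (δ : ℝ) (hδ : 0 ≤ δ)
    (μY : ℝ → ℝ)
    (hμY : ∀ α, μY α = 1 / 2 * (1 - (2 : ℝ) ^ (-(n : ℝ))) * (1 + δ) *
        (Real.tan α + ρ * (1 + Real.tan α ^ 2) / Real.tan α))
    (αY : ℝ) (hαY : αY = Real.arctan (Real.sqrt (ρ / (1 + ρ)))) :
    αY ∈ Set.Ioo 0 (π / 2) ∧
    (∀ α ∈ Set.Ioo 0 (π / 2), α ≠ αY → μY αY < μY α) ∧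
    μY αY = (1 - (2 : ℝ) ^ (-(n : ℝ))) * (1 + δ) * Real.sqrt (ρ * (1 + ρ)) := by
  have hρ1 : (0:ℝ) < 1 + ρ := by linarith
  set a := Real.sqrt ρ with ha_def
  set b := Real.sqrt (1 + ρ) with hb_def
  have ha : 0 < a := Real.sqrt_pos.mpr hρ
  have hb : 0 < b := Real.sqrt_pos.mpr hρ1
  have ha2 : a ^ 2 = ρ := Real.sq_sqrt hρ.le
  have hb2 : b ^ 2 = 1 + ρ := Real.sq_sqrt hρ1.le
  have hts : Real.sqrt (ρ / (1 + ρ)) = a / b := Real.sqrt_div hρ.le _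
  have htpos : 0 < a / b := div_pos ha hb
  have hmem : αY ∈ Set.Ioo 0 (π / 2) := by
    rw [hαY, hts]
    refine ⟨?_, Real.arctan_lt_pi_div_two _⟩
    have := Real.arctan_strictMono htpos
    rwa [Real.arctan_zero] at this
  have htan : Real.tan αY = a / b := by rw [hαY, hts, Real.tan_arctan]
  -- positivity of the constant
  have hpow : (2:ℝ) ^ (-(n : ℝ)) < 1 := by
    apply Real.rpow_lt_one_of_one_lt_of_neg one_lt_two
    have : (1:ℝ) ≤ (n:ℝ) := by exact_mod_cast hn
    linarith
  have hC : 0 < 1 / 2 * (1 - (2 : ℝ) ^ (-(n : ℝ))) * (1 + δ) := by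
    have h1 : 0 < 1 - (2:ℝ) ^ (-(n : ℝ)) := by linarith
    positivity
  have hsab : Real.sqrt (ρ * (1 + ρ)) = a * b := Real.sqrt_mul hρ.le _
  have hval : Real.tan αY + ρ * (1 + Real.tan αY ^ 2) / Real.tan αY = 2 * (a * b) := by
    have hb2' : b ^ 2 = 1 + a ^ 2 := by rw [ha2]; exact hb2
    rw [htan, ← ha2]
    field_simp
    linear_combination (-1 : ℝ) * hb2'
  have key : ∀ t : ℝ, 0 < t → t ≠ a / b →
      2 * (a * b) < t + ρ * (1 + t ^ 2) / t := by
    intro t ht hne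
    have hrw : t + ρ * (1 + t ^ 2) / t = ((1 + ρ) * t ^ 2 + ρ) / t := by
      field_simp; ring
    rw [hrw, lt_div_iff₀ ht]
    have hne' : b * t - a ≠ 0 := by
      intro h
      apply hne
      field_simp
      linarith
    have hsq : 0 < (b * t - a) ^ 2 := by positivity
    nlinarith [ha2, hb2]
  refine ⟨hmem, ?_, ?_⟩
  · intro α hα hne
    rw [hμY, hμY, hval]
    apply mul_lt_mul_of_pos_left _ hC
    have htα : 0 < Real.tan α :=
      Real.tan_pos_of_pos_of_lt_pi_div_two hα.1 hα.2
    apply key _ htα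
    intro h
    apply hne
    have h1 : α ∈ Set.Ioo (-(π/2)) (π/2) := ⟨by linarith [hα.1, Real.pi_pos], hα.2⟩
    have h2 : αY ∈ Set.Ioo (-(π/2)) (π/2) := ⟨by linarith [hmem.1, Real.pi_pos], hmem.2⟩
    exact Real.injOn_tan h1 h2 (by rw [h, htan])
  · rw [hμY, hval, hsab]; ring
end
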